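/- Fix integers p ≥ 1 and r_1,…,r_p ≥ 1, facets F_1,…,F_m ⊆ {1,…,p}, a constant M > 1, probability weights f : 𝒳 → [0,1] with Σ_{x∈𝒳} f_x = 1, and a function ψ : 𝒳 → ℝ. For a family U = (u^(1),…,u^(m)), where u^(k) is a real-valued function on ∏_{i∈F_k}{1,…,r_i}, define S_U(x) = Σ_{k=1}^m u^(k)(x|_{F_k}) and R(U) = Σ_{x∈𝒳} f_x·(−ψ_x·S_U(x) + exp(S_U(x))). Let Φ' be a convex set of such families satisfying |S_U(x)| ≤ log M for all U ∈ Φ' and all x ∈ 𝒳, and let U* ∈ Φ' satisfy R(U*) ≤ R(U) for all U ∈ Φ'. Then for every U ∈ Φ': R(U) − R(U*) ≥ (1/(2M))·Σ_{x∈𝒳} f_x·(S_U(x) − S_{U*}(x))². -/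

import Mathlib

open Real

private lemma nonneg_of_deriv' {g : ℝ → ℝ} (hg : Differentiable ℝ g) (h0 : g 0 = 0)
    (hd : ∀ x, 0 ≤ x → 0 ≤ deriv g x) {d : ℝ} (hdd : 0 ≤ d) : 0 ≤ g d := by
  have hmono : MonotoneOn g (Set.Ici 0) := by
    refine monotoneOn_of_deriv_nonneg (convex_Ici 0) hg.continuous.continuousOn
      (fun x _ => (hg x).differentiableWithinAt) (fun x hx => ?_)
    rw [interior_Ici] at hx
    exact hd x (le_of_lt hx)
  have := hmono Set.self_mem_Ici (Set.mem_Ici.2 hdd) hdd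
  simpa [h0] using this

private lemma exp_ge_quadratic {d : ℝ} (hd : 0 ≤ d) : 1 + d + d ^ 2 / 2 ≤ Real.exp d := by
  have := Real.sum_le_exp_of_nonneg hd 3
  simp [Finset.sum_range_succ, Nat.factorial] at this
  nlinarith [this]

private lemma exp_le_quadratic {d : ℝ} (hd : d ≤ 0) : Real.exp d ≤ 1 + d + d ^ 2 / 2 := by
  have key : 0 ≤ (fun s : ℝ => 1 - s + s ^ 2 / 2 - Real.exp (-s)) (-d) := by
    have hder : ∀ s : ℝ, HasDerivAt (fun s : ℝ => 1 - s + s ^ 2 / 2 - Real.exp (-s))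
        (-1 + s + Real.exp (-s)) s := by
      intro s
      have h1 : HasDerivAt (fun s : ℝ => Real.exp (-s)) (-Real.exp (-s)) s := by
        simpa [Function.comp_def] using (Real.hasDerivAt_exp (-s)).comp s (hasDerivAt_neg s)
      have h2 : HasDerivAt (fun s : ℝ => 1 - s + s ^ 2 / 2 - Real.exp (-s))
          (0 - 1 + (↑2 * s ^ 1) / 2 - -Real.exp (-s)) s :=
        (((hasDerivAt_const s (1:ℝ)).sub (hasDerivAt_id s)).add
          ((hasDerivAt_pow 2 s).div_const 2)).sub h1
      convert h2 using 1
      push_cast; ring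
    refine nonneg_of_deriv' (fun s => (hder s).differentiableAt) (by norm_num)
      (fun s hs => ?_) (by linarith)
    rw [(hder s).deriv]
    nlinarith [Real.add_one_le_exp (-s)]
  simp only [neg_neg, neg_sq] at key
  linarith [key]

-- for d ≥ 0 : exp d - 1 - d ≤ exp d * d^2/2
private lemma exp_sub_linear_le {d : ℝ} (hd : 0 ≤ d) :
    Real.exp d - 1 - d ≤ Real.exp d * d ^ 2 / 2 := by
  have key : 0 ≤ (fun s : ℝ => s ^ 2 / 2 - 1 + Real.exp (-s) * (1 + s)) d := by
    have hder : ∀ s : ℝ, HasDerivAt (fun s : ℝ => s ^ 2 / 2 - 1 + Real.exp (-s) * (1 + s))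
        (s - s * Real.exp (-s)) s := by
      intro s
      have h1 : HasDerivAt (fun s : ℝ => Real.exp (-s)) (-Real.exp (-s)) s := by
        simpa [Function.comp_def] using (Real.hasDerivAt_exp (-s)).comp s (hasDerivAt_neg s)
      have h3 : HasDerivAt (fun s : ℝ => Real.exp (-s) * (1 + s))
          (-Real.exp (-s) * (1 + s) + Real.exp (-s) * (0 + 1)) s :=
        h1.mul ((hasDerivAt_const s (1:ℝ)).add (hasDerivAt_id s))
      have h2 : HasDerivAt (fun s : ℝ => s ^ 2 / 2 - 1 + Real.exp (-s) * (1 + s))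
          ((↑2 * s ^ 1) / 2 - 0 + (-Real.exp (-s) * (1 + s) + Real.exp (-s) * (0 + 1))) s :=
        (((hasDerivAt_pow 2 s).div_const 2).sub (hasDerivAt_const s (1:ℝ))).add h3
      convert h2 using 1
      push_cast; ring
    refine nonneg_of_deriv' (fun s => (hder s).differentiableAt) (by norm_num)
      (fun s hs => ?_) hd
    rw [(hder s).deriv]
    have : Real.exp (-s) ≤ 1 := Real.exp_le_one_iff.mpr (by linarith)
    nlinarith [Real.exp_pos (-s)]
  simp only at key
  have E : Real.exp d * Real.exp (-d) = 1 := by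
    rw [← Real.exp_add]; simp
  nlinarith [mul_nonneg (Real.exp_pos d).le key, E]

-- for d ≤ 0 : exp d * d^2/2 ≤ exp d - 1 - d
private lemma exp_sub_linear_ge {d : ℝ} (hd : d ≤ 0) :
    Real.exp d * d ^ 2 / 2 ≤ Real.exp d - 1 - d := by
  have key : 0 ≤ (fun s : ℝ => 1 + Real.exp s * (s - 1) - s ^ 2 / 2) (-d) := by
    have hder : ∀ s : ℝ, HasDerivAt (fun s : ℝ => 1 + Real.exp s * (s - 1) - s ^ 2 / 2)
        (s * Real.exp s - s) s := by
      intro s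
      have h3 : HasDerivAt (fun s : ℝ => Real.exp s * (s - 1))
          (Real.exp s * (s - 1) + Real.exp s * (1 - 0)) s :=
        (Real.hasDerivAt_exp s).mul ((hasDerivAt_id s).sub (hasDerivAt_const s (1:ℝ)))
      have h2 : HasDerivAt (fun s : ℝ => 1 + Real.exp s * (s - 1) - s ^ 2 / 2)
          (0 + (Real.exp s * (s - 1) + Real.exp s * (1 - 0)) - (↑2 * s ^ 1) / 2) s :=
        ((hasDerivAt_const s (1:ℝ)).add h3).sub ((hasDerivAt_pow 2 s).div_const 2)
      convert h2 using 1
      push_cast; ring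
    refine nonneg_of_deriv' (fun s => (hder s).differentiableAt) (by norm_num)
      (fun s hs => ?_) (by linarith)
    rw [(hder s).deriv]
    nlinarith [Real.one_le_exp hs]
  simp only at key
  have E : Real.exp d * Real.exp (-d) = 1 := by
    rw [← Real.exp_add]; simp
  nlinarith [mul_nonneg (Real.exp_pos d).le key, E]

lemma keyL {M a b : ℝ} (hM : 1 < M) (ha : |a| ≤ Real.log M) (hb : |b| ≤ Real.log M) :
    Real.exp a + Real.exp a * (b - a) + 1 / (2 * M) * (b - a) ^ 2 ≤ Real.exp b := by
  have hM0 : (0:ℝ) < M := by linarith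
  have hMa : M⁻¹ ≤ Real.exp a := by
    rw [← Real.exp_log hM0] at *
    rw [← Real.exp_neg]
    exact Real.exp_le_exp.2 (by cases abs_le.1 ha; linarith)
  have hMb : M⁻¹ ≤ Real.exp b := by
    rw [← Real.exp_log hM0] at *
    rw [← Real.exp_neg]
    exact Real.exp_le_exp.2 (by cases abs_le.1 hb; linarith)
  have E : Real.exp b = Real.exp a * Real.exp (b - a) := by
    rw [← Real.exp_add]; ring_nf
  rcases le_or_gt a b with hab | hab
  · have hq := exp_ge_quadratic (d := b - a) (by linarith)
    have h2 := mul_le_mul_of_nonneg_left hq (Real.exp_pos a).le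
    have h3 := mul_le_mul_of_nonneg_right hMa (sq_nonneg (b - a))
    have hdiv : 1 / (2 * M) * (b - a) ^ 2 = (M⁻¹ * (b - a) ^ 2) / 2 := by
      field_simp
    rw [hdiv]
    nlinarith [Real.exp_pos a, sq_nonneg (b - a)]
  · have hq := exp_sub_linear_ge (d := b - a) (by linarith)
    have h2 := mul_le_mul_of_nonneg_left hq (Real.exp_pos a).le
    have h3 := mul_le_mul_of_nonneg_right hMb (sq_nonneg (b - a))
    have hdiv : 1 / (2 * M) * (b - a) ^ 2 = (M⁻¹ * (b - a) ^ 2) / 2 := by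
      field_simp
    rw [hdiv]
    nlinarith [Real.exp_pos a, sq_nonneg (b - a)]

lemma keyU {M a b : ℝ} (hM : 1 < M) (ha : |a| ≤ Real.log M) (hb : |b| ≤ Real.log M) :
    Real.exp b ≤ Real.exp a + Real.exp a * (b - a) + M * (b - a) ^ 2 / 2 := by
  have hM0 : (0:ℝ) < M := by linarith
  have hMa : Real.exp a ≤ M := by
    rw [← Real.exp_log hM0]
    exact Real.exp_le_exp.2 (abs_le.1 ha).2
  have hMb : Real.exp b ≤ M := by
    rw [← Real.exp_log hM0]
    exact Real.exp_le_exp.2 (abs_le.1 hb).2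
  have E : Real.exp b = Real.exp a * Real.exp (b - a) := by
    rw [← Real.exp_add]; ring_nf
  rcases le_or_gt a b with hab | hab
  · have hq := exp_sub_linear_le (d := b - a) (by linarith)
    have h2 := mul_le_mul_of_nonneg_left hq (Real.exp_pos a).le
    have h3 := mul_le_mul_of_nonneg_right hMb (sq_nonneg (b - a))
    nlinarith [Real.exp_pos a, sq_nonneg (b - a)]
  · have hq := exp_le_quadratic (d := b - a) (by linarith)
    have h2 := mul_le_mul_of_nonneg_left hq (Real.exp_pos a).le
    have h3 := mul_le_mul_of_nonneg_right hMa (sq_nonneg (b - a))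
    nlinarith [Real.exp_pos a, sq_nonneg (b - a)]

lemma risk_upper {ι : Type*} [Fintype ι] {M : ℝ} (hM : 1 < M)
    (f ψ t d : ι → ℝ) (hf : ∀ x, 0 ≤ f x) (τ : ℝ)
    (hbt : ∀ x, |t x| ≤ Real.log M) (hbτ : ∀ x, |t x + τ * d x| ≤ Real.log M) :
    ∑ x, f x * (-ψ x * (t x + τ * d x) + Real.exp (t x + τ * d x)) ≤
      (∑ x, f x * (-ψ x * t x + Real.exp (t x))) +
        τ * (∑ x, f x * ((-ψ x + Real.exp (t x)) * d x)) +
        τ ^ 2 * ((M / 2) * ∑ x, f x * d x ^ 2) := by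
  have hpt : ∀ x, f x * (-ψ x * (t x + τ * d x) + Real.exp (t x + τ * d x)) ≤
      f x * (-ψ x * t x + Real.exp (t x)) + τ * (f x * ((-ψ x + Real.exp (t x)) * d x)) +
      τ ^ 2 * ((M / 2) * (f x * d x ^ 2)) := by
    intro x
    have hk := keyU hM (hbt x) (hbτ x)
    have h2 := mul_le_mul_of_nonneg_left hk (hf x)
    nlinarith [h2]
  calc ∑ x, f x * (-ψ x * (t x + τ * d x) + Real.exp (t x + τ * d x))
      ≤ ∑ x, (f x * (-ψ x * t x + Real.exp (t x)) +
          τ * (f x * ((-ψ x + Real.exp (t x)) * d x)) +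
          τ ^ 2 * ((M / 2) * (f x * d x ^ 2))) := Finset.sum_le_sum fun x _ => hpt x
    _ = _ := by
      simp only [Finset.sum_add_distrib, ← Finset.mul_sum]

lemma risk_lower {ι : Type*} [Fintype ι] {M : ℝ} (hM : 1 < M)
    (f ψ t s : ι → ℝ) (hf : ∀ x, 0 ≤ f x)
    (hbt : ∀ x, |t x| ≤ Real.log M) (hbs : ∀ x, |s x| ≤ Real.log M) :
    (∑ x, f x * (-ψ x * t x + Real.exp (t x))) +
      (∑ x, f x * ((-ψ x + Real.exp (t x)) * (s x - t x))) +
      (1 / (2 * M)) * ∑ x, f x * (s x - t x) ^ 2 ≤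
    ∑ x, f x * (-ψ x * s x + Real.exp (s x)) := by
  have hpt : ∀ x, f x * (-ψ x * t x + Real.exp (t x)) +
      f x * ((-ψ x + Real.exp (t x)) * (s x - t x)) +
      (1 / (2 * M)) * (f x * (s x - t x) ^ 2) ≤
      f x * (-ψ x * s x + Real.exp (s x)) := by
    intro x
    have hk := keyL hM (hbt x) (hbs x)
    have h2 := mul_le_mul_of_nonneg_left hk (hf x)
    nlinarith [h2]
  calc (∑ x, f x * (-ψ x * t x + Real.exp (t x))) +
      (∑ x, f x * ((-ψ x + Real.exp (t x)) * (s x - t x))) +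
      (1 / (2 * M)) * ∑ x, f x * (s x - t x) ^ 2
      = ∑ x, (f x * (-ψ x * t x + Real.exp (t x)) +
          f x * ((-ψ x + Real.exp (t x)) * (s x - t x)) +
          (1 / (2 * M)) * (f x * (s x - t x) ^ 2)) := by
        simp only [Finset.sum_add_distrib, ← Finset.mul_sum]
    _ ≤ _ := Finset.sum_le_sum fun x _ => hpt x



/-- Intermediate strong-convexity bound in the proof of the paper's Proposition 3.6:
for a minimizer `U*` of the reparametrized risk `R` over a convex constraint set `Φ'` on
which the linear statistics `S_U` are bounded by `log M`, the excess risk of any `U ∈ Φ'`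
dominates `1/(2M)` times the weighted squared discrepancy of the linear statistics. -/
theorem excess_risk_lower_bound_linear {p m : ℕ} (hp : 1 ≤ p)
    (r : Fin p → ℕ) (hr : ∀ i, 1 ≤ r i)
    (F : Fin m → Finset (Fin p)) (M : ℝ) (hM : 1 < M)
    (f : (∀ i, Fin (r i)) → ℝ) (hf : ∀ x, f x ∈ Set.Icc (0 : ℝ) 1)
    (hsum : ∑ x, f x = 1)
    (ψ : (∀ i, Fin (r i)) → ℝ)
    (Φ' : Set (∀ k : Fin m, ((i : {i : Fin p // i ∈ F k}) → Fin (r i.1)) → ℝ))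
    (hconv : Convex ℝ Φ')
    (hbound : ∀ U ∈ Φ', ∀ x : ∀ i, Fin (r i),
      |∑ k, U k (fun i => x i.1)| ≤ Real.log M)
    (Ustar : ∀ k : Fin m, ((i : {i : Fin p // i ∈ F k}) → Fin (r i.1)) → ℝ)
    (hUstar : Ustar ∈ Φ')
    (hmin : ∀ U ∈ Φ',
      ∑ x, f x * (-ψ x * (∑ k, Ustar k (fun i => x i.1)) +
          Real.exp (∑ k, Ustar k (fun i => x i.1))) ≤
        ∑ x, f x * (-ψ x * (∑ k, U k (fun i => x i.1)) +
          Real.exp (∑ k, U k (fun i => x i.1)))) :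
    ∀ U ∈ Φ',
      (∑ x, f x * (-ψ x * (∑ k, U k (fun i => x i.1)) +
          Real.exp (∑ k, U k (fun i => x i.1)))) -
        (∑ x, f x * (-ψ x * (∑ k, Ustar k (fun i => x i.1)) +
          Real.exp (∑ k, Ustar k (fun i => x i.1)))) ≥
      (1 / (2 * M)) *
        ∑ x, f x * ((∑ k, U k (fun i => x i.1)) - (∑ k, Ustar k (fun i => x i.1))) ^ 2 := by
  intro U hU
  classical
  have hf0 : ∀ x, 0 ≤ f x := fun x => (hf x).1
  have hQ : 0 ≤ ∑ x, f x * ((∑ k, U k (fun i => x i.1)) - (∑ k, Ustar k (fun i => x i.1))) ^ 2 :=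
    Finset.sum_nonneg fun x _ => mul_nonneg (hf0 x) (sq_nonneg _)
  -- Step A : first-order optimality gives nonnegativity of the linear term up to O(τ)
  have hA : ∀ τ : ℝ, 0 < τ → τ ≤ 1 →
      0 ≤ (∑ x, f x * ((-ψ x + Real.exp (∑ k, Ustar k fun i => x i.1)) *
            ((∑ k, U k fun i => x i.1) - (∑ k, Ustar k fun i => x i.1)))) +
          τ * ((M / 2) * ∑ x, f x *
            ((∑ k, U k fun i => x i.1) - (∑ k, Ustar k fun i => x i.1)) ^ 2) := by
    intro τ hτ0 hτ1
    set Ut := (1 - τ) • Ustar + τ • U with hUtdef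
    have hUtmem : Ut ∈ Φ' := hconv hUstar hU (by linarith) (by linarith) (by ring)
    have hS : ∀ x : ∀ i, Fin (r i), (∑ k, Ut k fun i => x i.1) =
        (∑ k, Ustar k fun i => x i.1) +
          τ * ((∑ k, U k fun i => x i.1) - (∑ k, Ustar k fun i => x i.1)) := by
      intro x
      simp only [hUtdef, Pi.add_apply, Pi.smul_apply, smul_eq_mul,
        Finset.sum_add_distrib, ← Finset.mul_sum]
      ring
    have hmin' := hmin Ut hUtmem
    simp only [hS] at hmin'
    have hup := risk_upper hM f ψ (fun x => ∑ k, Ustar k fun i => x i.1)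
        (fun x => (∑ k, U k fun i => x i.1) - (∑ k, Ustar k fun i => x i.1)) hf0 τ
        (fun x => hbound Ustar hUstar x)
        (fun x => by
          have h := hbound Ut hUtmem x
          rwa [hS x] at h)
    beta_reduce at hup
    have h4 : 0 ≤ τ * (∑ x, f x * ((-ψ x + Real.exp (∑ k, Ustar k fun i => x i.1)) *
            ((∑ k, U k fun i => x i.1) - (∑ k, Ustar k fun i => x i.1)))) +
          τ ^ 2 * ((M / 2) * ∑ x, f x *
            ((∑ k, U k fun i => x i.1) - (∑ k, Ustar k fun i => x i.1)) ^ 2) := by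
      linarith [hmin', hup]
    by_contra h
    push_neg at h
    have h5 := mul_neg_of_pos_of_neg hτ0 h
    nlinarith [h4]
  -- the linear term is nonnegative
  have hLnn : 0 ≤ ∑ x, f x * ((-ψ x + Real.exp (∑ k, Ustar k fun i => x i.1)) *
      ((∑ k, U k fun i => x i.1) - (∑ k, Ustar k fun i => x i.1))) := by
    by_contra h
    push_neg at h
    set L := ∑ x, f x * ((-ψ x + Real.exp (∑ k, Ustar k fun i => x i.1)) *
      ((∑ k, U k fun i => x i.1) - (∑ k, Ustar k fun i => x i.1))) with hLdef
    set C := (M / 2) * ∑ x, f x *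
      ((∑ k, U k fun i => x i.1) - (∑ k, Ustar k fun i => x i.1)) ^ 2 with hCdef
    have hC : 0 ≤ C := mul_nonneg (by linarith) hQ
    rcases eq_or_lt_of_le hC with hC0 | hC0
    · have h1 := hA 1 one_pos le_rfl
      rw [← hC0] at h1
      simp at h1
      linarith
    · have hτpos : 0 < min 1 (-L / (2 * C)) :=
        lt_min one_pos (div_pos (neg_pos.2 h) (by linarith))
      have hτ := hA (min 1 (-L / (2 * C))) hτpos (min_le_left _ _)
      have h1 : min 1 (-L / (2 * C)) ≤ -L / (2 * C) := min_le_right _ _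
      have h2 : min 1 (-L / (2 * C)) * C ≤ (-L / (2 * C)) * C :=
        mul_le_mul_of_nonneg_right h1 hC
      have h3 : (-L / (2 * C)) * C = -L / 2 := by
        field_simp
      nlinarith [hτ]
  -- Step B : strong convexity lower bound
  have key := risk_lower hM f ψ (fun x => ∑ k, Ustar k fun i => x i.1)
      (fun x => ∑ k, U k fun i => x i.1) hf0
      (fun x => hbound Ustar hUstar x) (fun x => hbound U hU x)
  beta_reduce at key
  linarith [key, hLnn]
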